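/- Let ξ ∈ ℝ and let x, y ∈ ℤ³ with w = [x,x,y] = -x·J·y·J·x (a symmetric matrix, hence a triple). Then there is a constant C(ξ) with ‖w‖ ≤ C(ξ)·(‖x‖²L(y) + ‖y‖L(x)²) and L(w) ≤ C(ξ)·(‖x‖L(y) + ‖y‖L(x))·L(x). -/
import Mathlib


open Matrix

def Jmat : Matrix (Fin 2) (Fin 2) ℤ := !![0, 1; -1, 0]

def toMat (x : Fin 3 → ℤ) : Matrix (Fin 2) (Fin 2) ℤ := !![x 0, x 1; x 1, x 2]

def ofMat (m : Matrix (Fin 2) (Fin 2) ℤ) : Fin 3 → ℤ := ![m 0 0, m 0 1, m 1 1]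

noncomputable def normT (x : Fin 3 → ℤ) : ℝ :=
  max (|(x 0 : ℝ)|) (max (|(x 1 : ℝ)|) (|(x 2 : ℝ)|))

noncomputable def Lf (ξ : ℝ) (x : Fin 3 → ℤ) : ℝ :=
  max (|(x 0 : ℝ) * ξ - (x 1 : ℝ)|) (|(x 0 : ℝ) * ξ ^ 2 - (x 2 : ℝ)|)

lemma ofMat_eq (x y : Fin 3 → ℤ) :
    ofMat (-(toMat x * Jmat * toMat y * Jmat * toMat x)) =
      ![x 1 ^ 2 * y 0 - 2 * (x 0 * (x 1 * y 1)) + x 0 ^ 2 * y 2,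
        x 1 * (x 2 * y 0) - x 1 ^ 2 * y 1 - x 0 * (x 2 * y 1) + x 0 * (x 1 * y 2),
        x 2 ^ 2 * y 0 - 2 * (x 1 * (x 2 * y 1)) + x 1 ^ 2 * y 2] := by
  funext i
  fin_cases i <;>
    simp [ofMat, toMat, Jmat, Matrix.mul_apply, Fin.sum_univ_two, Fin.sum_univ_succ] <;> ring


lemma abs_add3 (a b c : ℝ) : |a + b + c| ≤ |a| + |b| + |c| :=
  (abs_add_le _ _).trans (by linarith [abs_add_le a b])
lemma abs_add4 (a b c d : ℝ) : |a + b + c + d| ≤ |a| + |b| + |c| + |d| :=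
  (abs_add_le _ _).trans (by linarith [abs_add3 a b c])
lemma abs_add5 (a b c d e : ℝ) : |a + b + c + d + e| ≤ |a| + |b| + |c| + |d| + |e| :=
  (abs_add_le _ _).trans (by linarith [abs_add4 a b c d])
lemma abs_add6 (a b c d e f : ℝ) :
    |a + b + c + d + e + f| ≤ |a| + |b| + |c| + |d| + |e| + |f| :=
  (abs_add_le _ _).trans (by linarith [abs_add5 a b c d e])
lemma abs_add7 (a b c d e f g : ℝ) :
    |a + b + c + d + e + f + g| ≤ |a| + |b| + |c| + |d| + |e| + |f| + |g| :=
  (abs_add_le _ _).trans (by linarith [abs_add6 a b c d e f])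
lemma abs_add8 (a b c d e f g h : ℝ) :
    |a + b + c + d + e + f + g + h| ≤ |a| + |b| + |c| + |d| + |e| + |f| + |g| + |h| :=
  (abs_add_le _ _).trans (by linarith [abs_add7 a b c d e f g])
lemma abs_add9 (a b c d e f g h i : ℝ) :
    |a + b + c + d + e + f + g + h + i| ≤
      |a| + |b| + |c| + |d| + |e| + |f| + |g| + |h| + |i| :=
  (abs_add_le _ _).trans (by linarith [abs_add8 a b c d e f g h])
lemma abs_add10 (a b c d e f g h i j : ℝ) :
    |a + b + c + d + e + f + g + h + i + j| ≤
      |a| + |b| + |c| + |d| + |e| + |f| + |g| + |h| + |i| + |j| :=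
  (abs_add_le _ _).trans (by linarith [abs_add9 a b c d e f g h i])

set_option maxHeartbeats 1000000 in
lemma key (ξ X0 X1 X2 Y0 Y1 Y2 : ℝ) :
    |X1 ^ 2 * Y0 - 2 * (X0 * (X1 * Y1)) + X0 ^ 2 * Y2| ⊔
        (|X1 * (X2 * Y0) - X1 ^ 2 * Y1 - X0 * (X2 * Y1) + X0 * (X1 * Y2)| ⊔
          |X2 ^ 2 * Y0 - 2 * (X1 * (X2 * Y1)) + X1 ^ 2 * Y2|) ≤
      100 * (1 + |ξ|) ^ 4 *
        ((|X0| ⊔ (|X1| ⊔ |X2|)) ^ 2 * (|Y0 * ξ - Y1| ⊔ |Y0 * ξ ^ 2 - Y2|) +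
          (|Y0| ⊔ (|Y1| ⊔ |Y2|)) * (|X0 * ξ - X1| ⊔ |X0 * ξ ^ 2 - X2|) ^ 2) ∧
    |(X1 ^ 2 * Y0 - 2 * (X0 * (X1 * Y1)) + X0 ^ 2 * Y2) * ξ -
          (X1 * (X2 * Y0) - X1 ^ 2 * Y1 - X0 * (X2 * Y1) + X0 * (X1 * Y2))| ⊔
        |(X1 ^ 2 * Y0 - 2 * (X0 * (X1 * Y1)) + X0 ^ 2 * Y2) * ξ ^ 2 -
          (X2 ^ 2 * Y0 - 2 * (X1 * (X2 * Y1)) + X1 ^ 2 * Y2)| ≤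
      100 * (1 + |ξ|) ^ 4 *
          ((|X0| ⊔ (|X1| ⊔ |X2|)) * (|Y0 * ξ - Y1| ⊔ |Y0 * ξ ^ 2 - Y2|) +
            (|Y0| ⊔ (|Y1| ⊔ |Y2|)) * (|X0 * ξ - X1| ⊔ |X0 * ξ ^ 2 - X2|)) *
        (|X0 * ξ - X1| ⊔ |X0 * ξ ^ 2 - X2|) := by
  set K : ℝ := 1 + |ξ| with hK
  set a : ℝ := X0 * ξ - X1 with hadef
  set b : ℝ := X0 * ξ ^ 2 - X2 with hbdef
  set c : ℝ := Y0 * ξ - Y1 with hcdef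
  set d : ℝ := Y0 * ξ ^ 2 - Y2 with hddef
  set Nx : ℝ := |X0| ⊔ (|X1| ⊔ |X2|) with hNx
  set Ny : ℝ := |Y0| ⊔ (|Y1| ⊔ |Y2|) with hNy
  set Lx : ℝ := |a| ⊔ |b| with hLx
  set Ly : ℝ := |c| ⊔ |d| with hLy
  have hx0 : |X0| ≤ Nx := le_max_left _ _
  have hx1 : |X1| ≤ Nx := le_trans (le_max_left _ _) (le_max_right _ _)
  have hx2 : |X2| ≤ Nx := le_trans (le_max_right _ _) (le_max_right _ _)
  have hy0 : |Y0| ≤ Ny := le_max_left _ _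
  have hy1 : |Y1| ≤ Ny := le_trans (le_max_left _ _) (le_max_right _ _)
  have hy2 : |Y2| ≤ Ny := le_trans (le_max_right _ _) (le_max_right _ _)
  have hal : |a| ≤ Lx := le_max_left _ _
  have hbl : |b| ≤ Lx := le_max_right _ _
  have hcl : |c| ≤ Ly := le_max_left _ _
  have hdl : |d| ≤ Ly := le_max_right _ _
  have hK0 : (0:ℝ) ≤ K := by rw [hK]; positivity
  have hK1 : (1:ℝ) ≤ K := by rw [hK]; linarith [abs_nonneg ξ]
  have hxi : |ξ| ≤ K := by rw [hK]; linarith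
  have hxi2 : ξ ^ 2 ≤ K ^ 2 := by
    rw [← sq_abs ξ]; exact pow_le_pow_left₀ (abs_nonneg ξ) hxi 2
  have hNx0 : (0:ℝ) ≤ Nx := (abs_nonneg _).trans hx0
  have hNy0 : (0:ℝ) ≤ Ny := (abs_nonneg _).trans hy0
  have hLx0 : (0:ℝ) ≤ Lx := (abs_nonneg _).trans hal
  have hLy0 : (0:ℝ) ≤ Ly := (abs_nonneg _).trans hcl
  have mK2 : K ≤ K ^ 2 := le_self_pow₀ hK1 two_ne_zero
  have mNxK : Nx ≤ Nx * K := le_mul_of_one_le_right hNx0 hK1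
  have mNxK2 : Nx * K ≤ Nx * K ^ 2 := mul_le_mul_of_nonneg_left mK2 hNx0
  have mNyK : Ny ≤ Ny * K := le_mul_of_one_le_right hNy0 hK1
  have mNyK2 : Ny * K ≤ Ny * K ^ 2 := mul_le_mul_of_nonneg_left mK2 hNy0
  have hLxK : Lx ≤ 2 * K ^ 2 * Nx := by
    rw [hLx]
    apply max_le
    · have t1 : |a| ≤ |X0| * |ξ| + |X1| := by
        rw [hadef, ← abs_mul]; exact abs_sub _ _
      have t2 : |X0| * |ξ| ≤ Nx * K := mul_le_mul hx0 hxi (abs_nonneg ξ) hNx0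
      linarith
    · have t1 : |b| ≤ |X0| * ξ ^ 2 + |X2| := by
        calc |b| ≤ |X0 * ξ ^ 2| + |X2| := by rw [hbdef]; exact abs_sub _ _
          _ = |X0| * |ξ ^ 2| + |X2| := by rw [abs_mul]
          _ = |X0| * ξ ^ 2 + |X2| := by rw [abs_pow, sq_abs]
      have t2 : |X0| * ξ ^ 2 ≤ Nx * K ^ 2 := mul_le_mul hx0 hxi2 (sq_nonneg ξ) hNx0
      linarith
  have hLyK : Ly ≤ 2 * K ^ 2 * Ny := by
    rw [hLy]
    apply max_le
    · have t1 : |c| ≤ |Y0| * |ξ| + |Y1| := by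
        rw [hcdef, ← abs_mul]; exact abs_sub _ _
      have t2 : |Y0| * |ξ| ≤ Ny * K := mul_le_mul hy0 hxi (abs_nonneg ξ) hNy0
      linarith
    · have t1 : |d| ≤ |Y0| * ξ ^ 2 + |Y2| := by
        calc |d| ≤ |Y0 * ξ ^ 2| + |Y2| := by rw [hddef]; exact abs_sub _ _
          _ = |Y0| * |ξ ^ 2| + |Y2| := by rw [abs_mul]
          _ = |Y0| * ξ ^ 2 + |Y2| := by rw [abs_pow, sq_abs]
      have t2 : |Y0| * ξ ^ 2 ≤ Ny * K ^ 2 := mul_le_mul hy0 hxi2 (sq_nonneg ξ) hNy0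
      linarith
  -- entrywise bounds
  have h0 : |X1 ^ 2 * Y0 - 2 * (X0 * (X1 * Y1)) + X0 ^ 2 * Y2| ≤
      Ny * (Lx * Lx) + 2 * (Nx * (Lx * Ly)) + Nx * (Nx * Ly) + 2 * (Nx * (Nx * (K * Ly))) := by
    calc |X1 ^ 2 * Y0 - 2 * (X0 * (X1 * Y1)) + X0 ^ 2 * Y2|
        = |Y0 * (a * a) + -(2 * (X0 * (a * c))) + -(X0 * (X0 * d)) + 2 * (X0 * (X0 * (ξ * c)))| := by
          rw [hadef, hcdef, hddef]; congr 1; ring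
      _ ≤ |Y0 * (a * a)| + |-(2 * (X0 * (a * c)))| + |-(X0 * (X0 * d))| +
            |2 * (X0 * (X0 * (ξ * c)))| := abs_add4 _ _ _ _
      _ ≤ _ := by
          simp only [abs_neg, abs_mul, abs_two]
          gcongr <;> first | assumption | positivity
  have h1 : |X1 * (X2 * Y0) - X1 ^ 2 * Y1 - X0 * (X2 * Y1) + X0 * (X1 * Y2)| ≤
      Lx * (Lx * Ly) + Ny * (Lx * Lx) + Ny * (K * (Lx * Lx)) + Nx * (Lx * Ly) + Nx * (Lx * Ly) +
        2 * (Nx * (K * (Lx * Ly))) + Nx * (Nx * (K * Ly)) + 2 * (Nx * (Nx * (K * (K * Ly)))) := by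
    calc |X1 * (X2 * Y0) - X1 ^ 2 * Y1 - X0 * (X2 * Y1) + X0 * (X1 * Y2)|
        = |a * (a * c) + Y0 * (a * b) + -(Y0 * (ξ * (a * a))) + -(X0 * (b * c)) + X0 * (a * d) +
            -(2 * (X0 * (ξ * (a * c)))) + -(X0 * (X0 * (ξ * d))) +
            2 * (X0 * (X0 * (ξ * (ξ * c))))| := by
          rw [hadef, hbdef, hcdef, hddef]; congr 1; ring
      _ ≤ _ := abs_add8 _ _ _ _ _ _ _ _
      _ ≤ _ := by
          simp only [abs_neg, abs_mul, abs_two]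
          gcongr <;> first | assumption | positivity
  have h2 : |X2 ^ 2 * Y0 - 2 * (X1 * (X2 * Y1)) + X1 ^ 2 * Y2| ≤
      2 * (Lx * (Lx * Ly)) + Lx * (Lx * Ly) + Ny * (Lx * Lx) + 2 * (Ny * (K * (Lx * Lx))) +
        Ny * (K * (K * (Lx * Lx))) + 2 * (Nx * (K * (Lx * Ly))) + 2 * (Nx * (K * (Lx * Ly))) +
        2 * (Nx * (K * (K * (Lx * Ly)))) + Nx * (Nx * (K * (K * Ly))) +
        2 * (Nx * (Nx * (K * (K * (K * Ly))))) := by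
    calc |X2 ^ 2 * Y0 - 2 * (X1 * (X2 * Y1)) + X1 ^ 2 * Y2|
        = |2 * (a * (b * c)) + -(a * (a * d)) + Y0 * (b * b) + -(2 * (Y0 * (ξ * (a * b)))) +
            Y0 * (ξ * (ξ * (a * a))) + -(2 * (X0 * (ξ * (b * c)))) + 2 * (X0 * (ξ * (a * d))) +
            -(2 * (X0 * (ξ * (ξ * (a * c))))) + -(X0 * (X0 * (ξ * (ξ * d)))) +
            2 * (X0 * (X0 * (ξ * (ξ * (ξ * c)))))| := by
          rw [hadef, hbdef, hcdef, hddef]; congr 1; ring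
      _ ≤ _ := abs_add10 _ _ _ _ _ _ _ _ _ _
      _ ≤ _ := by
          simp only [abs_neg, abs_mul, abs_two]
          gcongr <;> first | assumption | positivity
  have h3 : |(X1 ^ 2 * Y0 - 2 * (X0 * (X1 * Y1)) + X0 ^ 2 * Y2) * ξ -
        (X1 * (X2 * Y0) - X1 ^ 2 * Y1 - X0 * (X2 * Y1) + X0 * (X1 * Y2))| ≤
      Lx * (Lx * Ly) + Ny * (Lx * Lx) + 2 * (Ny * (K * (Lx * Lx))) + Nx * (Lx * Ly) +
        Nx * (Lx * Ly) := by
    calc |(X1 ^ 2 * Y0 - 2 * (X0 * (X1 * Y1)) + X0 ^ 2 * Y2) * ξ -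
          (X1 * (X2 * Y0) - X1 ^ 2 * Y1 - X0 * (X2 * Y1) + X0 * (X1 * Y2))|
        = |-(a * (a * c)) + -(Y0 * (a * b)) + 2 * (Y0 * (ξ * (a * a))) + X0 * (b * c) +
            -(X0 * (a * d))| := by
          rw [hadef, hbdef, hcdef, hddef]; congr 1; ring
      _ ≤ _ := abs_add5 _ _ _ _ _
      _ ≤ _ := by
          simp only [abs_neg, abs_mul, abs_two]
          gcongr <;> first | assumption | positivity
  have h4 : |(X1 ^ 2 * Y0 - 2 * (X0 * (X1 * Y1)) + X0 ^ 2 * Y2) * ξ ^ 2 -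
        (X2 ^ 2 * Y0 - 2 * (X1 * (X2 * Y1)) + X1 ^ 2 * Y2)| ≤
      2 * (Lx * (Lx * Ly)) + Lx * (Lx * Ly) + Ny * (Lx * Lx) + 2 * (Ny * (K * (Lx * Lx))) +
        2 * (Nx * (K * (Lx * Ly))) + 2 * (Nx * (K * (Lx * Ly))) := by
    calc |(X1 ^ 2 * Y0 - 2 * (X0 * (X1 * Y1)) + X0 ^ 2 * Y2) * ξ ^ 2 -
          (X2 ^ 2 * Y0 - 2 * (X1 * (X2 * Y1)) + X1 ^ 2 * Y2)|
        = |-(2 * (a * (b * c))) + a * (a * d) + -(Y0 * (b * b)) + 2 * (Y0 * (ξ * (a * b))) +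
            2 * (X0 * (ξ * (b * c))) + -(2 * (X0 * (ξ * (a * d))))| := by
          rw [hadef, hbdef, hcdef, hddef]; congr 1; ring
      _ ≤ _ := abs_add6 _ _ _ _ _ _
      _ ≤ _ := by
          simp only [abs_neg, abs_mul, abs_two]
          gcongr <;> first | assumption | positivity
  -- combination facts
  have hP : (0:ℝ) ≤ Nx * (Nx * Ly) := by positivity
  have hQ : (0:ℝ) ≤ Ny * (Lx * Lx) := by positivity
  have hR0 : (0:ℝ) ≤ Nx * (Lx * Ly) := by positivity
  have fS : Lx * (Lx * Ly) ≤ 2 * K ^ 2 * (Ny * (Lx * Lx)) := by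
    have := mul_le_mul_of_nonneg_left hLyK (mul_nonneg hLx0 hLx0)
    linarith [this]
  have fR : Nx * (Lx * Ly) ≤ 2 * K ^ 2 * (Nx * (Nx * Ly)) := by
    have := mul_le_mul_of_nonneg_right hLxK (mul_nonneg hNx0 hLy0)
    linarith [this]
  have fRK : K * (Nx * (Lx * Ly)) ≤ 2 * K ^ 3 * (Nx * (Nx * Ly)) := by
    have := mul_le_mul_of_nonneg_left fR hK0
    linarith [this]
  have fRK2 : K ^ 2 * (Nx * (Lx * Ly)) ≤ 2 * K ^ 4 * (Nx * (Nx * Ly)) := by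
    have := mul_le_mul_of_nonneg_left fR (mul_nonneg hK0 hK0)
    linarith [this]
  have hK14 : (1:ℝ) ≤ K ^ 4 := one_le_pow₀ hK1
  have hKK4 : K ≤ K ^ 4 := by
    calc K = K ^ 1 := (pow_one K).symm
      _ ≤ K ^ 4 := pow_le_pow_right₀ hK1 (by norm_num)
  have hK24 : K ^ 2 ≤ K ^ 4 := pow_le_pow_right₀ hK1 (by norm_num)
  have hK34 : K ^ 3 ≤ K ^ 4 := pow_le_pow_right₀ hK1 (by norm_num)
  have mono : ∀ M : ℝ, 0 ≤ M →
      M ≤ K ^ 4 * M ∧ K * M ≤ K ^ 4 * M ∧ K ^ 2 * M ≤ K ^ 4 * M ∧ K ^ 3 * M ≤ K ^ 4 * M := by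
    intro M hM
    exact ⟨le_mul_of_one_le_left hM hK14, mul_le_mul_of_nonneg_right hKK4 hM,
      mul_le_mul_of_nonneg_right hK24 hM, mul_le_mul_of_nonneg_right hK34 hM⟩
  obtain ⟨gP0, gP1, gP2, gP3⟩ := mono _ hP
  obtain ⟨gQ0, gQ1, gQ2, gQ3⟩ := mono _ hQ
  obtain ⟨gR0, gR1, gR2, gR3⟩ := mono _ hR0
  constructor
  · apply max_le
    · exact h0.trans (by linarith [fR, fRK, gP0, gP1, gP2, gP3, gQ0, hP, hQ])
    · apply max_le
      · exact h1.trans (by linarith [fS, fR, fRK, fRK2, gP0, gP1, gP2, gP3, gQ0, gQ1, gQ2, hP, hQ])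
      · exact h2.trans (by linarith [fS, fR, fRK, fRK2, gP0, gP1, gP2, gP3, gQ0, gQ1, gQ2, hP, hQ])
  · apply max_le
    · exact h3.trans (by linarith [fS, gQ0, gQ1, gQ2, gR0, gR1, gR2, hP, hQ, hR0])
    · exact h4.trans (by linarith [fS, gQ0, gQ1, gQ2, gR0, gR1, gR2, hP, hQ, hR0])

theorem bracket_estimate (ξ : ℝ) :
    ∃ C : ℝ, 0 < C ∧ ∀ x y : Fin 3 → ℤ,
      normT (ofMat (-(toMat x * Jmat * toMat y * Jmat * toMat x))) ≤
          C * (normT x ^ 2 * Lf ξ y + normT y * Lf ξ x ^ 2) ∧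
        Lf ξ (ofMat (-(toMat x * Jmat * toMat y * Jmat * toMat x))) ≤
          C * (normT x * Lf ξ y + normT y * Lf ξ x) * Lf ξ x := by
  refine ⟨100 * (1 + |ξ|) ^ 4, by positivity, fun x y => ?_⟩
  rw [ofMat_eq]
  simp only [normT, Lf, Matrix.cons_val_zero, Matrix.cons_val_one, Matrix.head_cons,
    Matrix.cons_val_two, Matrix.tail_cons]
  push_cast
  exact key ξ _ _ _ _ _ _
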